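/- Let Θ ⊆ ℝⁿ be a nonempty closed convex set with diameter at most D, let ℓ_t : ℝⁿ → ℝ for t = 1,…,T be convex differentiable functions whose gradients satisfy ‖∇ℓ_t(θ)‖ ≤ G for all θ. Define iterates θ̂_1 ∈ Θ and θ̂_{t+1} = Proj_Θ(θ̂_t − η_t ∇ℓ_t(θ̂_t)) with η_t = D/(G√t). Then for any θ̄ ∈ Θ, ∑_{t=1}^T (ℓ_t(θ̂_t) − ℓ_t(θ̄)) ≤ (3/2) G D √T. -/

import Mathlib

open Finset RealInnerProductSpace


lemma grad_ineq {F : Type*} [NormedAddCommGroup F] [InnerProductSpace ℝ F] [CompleteSpace F]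
    {f : F → ℝ} {gx x : F} (hconv : ConvexOn ℝ Set.univ f)
    (hgrad : HasGradientAt f gx x) (y : F) : ⟪gx, y - x⟫ ≤ f y - f x := by
  have hF : HasFDerivAt f ((InnerProductSpace.toDual ℝ F) gx) x :=
    hasGradientAt_iff_hasFDerivAt.mp hgrad
  set c : ℝ → F := fun s => x + s • (y - x) with hc
  have hcd : HasDerivAt c (y - x) 0 := by
    have h := ((hasDerivAt_id (0:ℝ)).smul_const (y - x)).const_add x
    simp only [id_eq, one_smul] at h
    exact h
  have hc0 : c 0 = x := by simp [hc]
  have hcomp : HasDerivAt (f ∘ c) ⟪gx, y - x⟫ 0 := by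
    have h := (hc0.symm ▸ hF).comp_hasDerivAt 0 hcd
    simpa using h
  have hconvc : ConvexOn ℝ Set.univ (f ∘ c) := by
    have haff := hconv.comp_affineMap (AffineMap.lineMap x y : ℝ →ᵃ[ℝ] F)
    have heq : f ∘ c = f ∘ (AffineMap.lineMap x y : ℝ →ᵃ[ℝ] F) := by
      funext s
      simp [hc, AffineMap.lineMap_apply, Function.comp]
      abel_nf
    simpa [heq] using haff
  have hs := hconvc.le_slope_of_hasDerivAt (Set.mem_univ (0:ℝ)) (Set.mem_univ (1:ℝ))
    one_pos hcomp
  rw [slope_def_field] at hs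
  simpa [hc, Function.comp] using hs

lemma proj_inner {F : Type*} [NormedAddCommGroup F] [InnerProductSpace ℝ F] [CompleteSpace F]
    {Θ : Set F} (hconv : Convex ℝ Θ) (hne : Θ.Nonempty)
    {P : F → F} (hPmem : ∀ z, P z ∈ Θ) (hPproj : ∀ z, ∀ y ∈ Θ, ‖z - P z‖ ≤ ‖z - y‖)
    (z w : F) (hw : w ∈ Θ) : ⟪z - P z, w - P z⟫ ≤ 0 := by
  haveI : Nonempty Θ := hne.to_subtype
  have heq : ‖z - P z‖ = ⨅ w : Θ, ‖z - (w : F)‖ := by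
    apply le_antisymm
    · exact le_ciInf fun w => hPproj z w w.2
    · have hbdd : BddBelow (Set.range fun w : Θ => ‖z - (w : F)‖) := by
        refine ⟨0, ?_⟩
        rintro a ⟨w, rfl⟩
        positivity
      exact ciInf_le hbdd ⟨P z, hPmem z⟩
  exact (norm_eq_iInf_iff_real_inner_le_zero hconv (hPmem z)).mp heq w hw

lemma sum_inv_sqrt (T : ℕ) :
    ∑ t ∈ Finset.Icc 1 T, (1 / Real.sqrt t) ≤ 2 * Real.sqrt T := by
  induction T with
  | zero => simp
  | succ T ih =>
    rw [Finset.sum_Icc_succ_top (by omega : 1 ≤ T + 1)]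
    have h1 : 0 < Real.sqrt ((T : ℝ) + 1) := Real.sqrt_pos.mpr (by positivity)
    have h2 : 0 ≤ Real.sqrt (T : ℝ) := Real.sqrt_nonneg _
    have h3 : Real.sqrt (T : ℝ) ^ 2 = (T : ℝ) := Real.sq_sqrt (by positivity)
    have h4 : Real.sqrt ((T : ℝ) + 1) ^ 2 = (T : ℝ) + 1 := Real.sq_sqrt (by positivity)
    have key : 1 / Real.sqrt ((T : ℝ) + 1) ≤
        2 * (Real.sqrt ((T : ℝ) + 1) - Real.sqrt (T : ℝ)) := by
      rw [div_le_iff₀ h1]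
      nlinarith
    push_cast
    linarith

lemma telescope_bound (a r : ℕ → ℝ) (B : ℝ) (ha0 : ∀ t, 0 ≤ a t)
    (hmono : ∀ t, a t ≤ a (t + 1)) (hr0 : ∀ t, 0 ≤ r t)
    (hrB : ∀ t, 1 ≤ t → r t ≤ B) :
    ∀ T, 1 ≤ T → ∑ t ∈ Finset.Icc 1 T, a t * (r t - r (t + 1)) ≤ a T * (B - r (T + 1)) := by
  intro T
  induction T with
  | zero => omega
  | succ T ih =>
    intro _
    by_cases hT0 : T = 0
    · subst hT0
      simp only [Finset.Icc_self, Finset.sum_singleton]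
      nlinarith [ha0 1, hrB 1 le_rfl]
    · have h1 : 1 ≤ T := by omega
      rw [Finset.sum_Icc_succ_top (by omega : 1 ≤ T + 1)]
      have hih := ih h1
      nlinarith [mul_nonneg (sub_nonneg.2 (hmono T)) (sub_nonneg.2 (hrB (T+1) (by omega)))]

/-- Regret bound for projected online gradient descent with learning rate
`η_t = D/(G√t)` on convex functions with gradients bounded by `G`, over a
closed convex set `Θ` of diameter at most `D`. -/
theorem ogd_regret_bound (n T : ℕ) (hT : 1 ≤ T)
    (Θ : Set (EuclideanSpace ℝ (Fin n))) (hne : Θ.Nonempty) (hcl : IsClosed Θ)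
    (hconvΘ : Convex ℝ Θ) (D G : ℝ) (hD : 0 < D) (hG : 0 < G)
    (hdiam : ∀ x ∈ Θ, ∀ y ∈ Θ, ‖x - y‖ ≤ D)
    (ℓ : ℕ → EuclideanSpace ℝ (Fin n) → ℝ)
    (g : ℕ → EuclideanSpace ℝ (Fin n) → EuclideanSpace ℝ (Fin n))
    (hgrad : ∀ t θ, HasGradientAt (ℓ t) (g t θ) θ)
    (hconvℓ : ∀ t, ConvexOn ℝ Set.univ (ℓ t))
    (hGbd : ∀ t θ, ‖g t θ‖ ≤ G)
    (P : EuclideanSpace ℝ (Fin n) → EuclideanSpace ℝ (Fin n))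
    (hPmem : ∀ z, P z ∈ Θ)
    (hPproj : ∀ z, ∀ y ∈ Θ, ‖z - P z‖ ≤ ‖z - y‖)
    (θh : ℕ → EuclideanSpace ℝ (Fin n)) (hinit : θh 1 ∈ Θ)
    (hstep : ∀ t, 1 ≤ t → θh (t + 1) = P (θh t - (D / (G * Real.sqrt t)) • g t (θh t))) :
    ∀ θbar ∈ Θ,
      ∑ t ∈ Finset.Icc 1 T, (ℓ t (θh t) - ℓ t θbar) ≤ (3 / 2) * G * D * Real.sqrt T := by
  intro θbar hθbar
  have hmem : ∀ t, 1 ≤ t → θh t ∈ Θ := by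
    intro t ht
    rcases Nat.exists_eq_add_of_le ht with ⟨s, rfl⟩
    cases s with
    | zero => simpa using hinit
    | succ s =>
      have he : 1 + (s + 1) = (s + 1) + 1 := by omega
      rw [he, hstep (s + 1) (by omega)]
      exact hPmem _
  set r : ℕ → ℝ := fun t => ‖θh t - θbar‖ ^ 2 with hr
  set a : ℕ → ℝ := fun t => G * Real.sqrt t / (2 * D) with ha
  have hr0 : ∀ t, 0 ≤ r t := fun t => sq_nonneg _
  have hrB : ∀ t, 1 ≤ t → r t ≤ D ^ 2 := by
    intro t ht
    have h := hdiam (θh t) (hmem t ht) θbar hθbar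
    exact pow_le_pow_left₀ (norm_nonneg _) h 2
  have ha0 : ∀ t, 0 ≤ a t := by
    intro t
    exact div_nonneg (mul_nonneg hG.le (Real.sqrt_nonneg _)) (by linarith)
  have hmono : ∀ t, a t ≤ a (t + 1) := by
    intro t
    simp only [ha]
    have hcast : ((t + 1 : ℕ) : ℝ) = (t : ℝ) + 1 := by push_cast; ring
    rw [hcast]
    have hs : Real.sqrt (t : ℝ) ≤ Real.sqrt ((t : ℝ) + 1) := Real.sqrt_le_sqrt (by linarith)
    have key := mul_le_mul_of_nonneg_left hs
      (le_of_lt (div_pos hG (by linarith : (0:ℝ) < 2 * D)))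
    have e1 : G / (2 * D) * Real.sqrt (t : ℝ) = G * Real.sqrt (t : ℝ) / (2 * D) := by ring
    have e2 : G / (2 * D) * Real.sqrt ((t : ℝ) + 1) = G * Real.sqrt ((t : ℝ) + 1) / (2 * D) := by
      ring
    rw [e1, e2] at key
    exact key
  have step : ∀ t ∈ Finset.Icc 1 T, ℓ t (θh t) - ℓ t θbar ≤
      a t * (r t - r (t + 1)) + G * D / (2 * Real.sqrt t) := by
    intro t htmem
    obtain ⟨ht1, -⟩ := Finset.mem_Icc.mp htmem
    have htpos : (0:ℝ) < (t : ℝ) := by exact_mod_cast Nat.lt_of_lt_of_le Nat.zero_lt_one ht1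
    set st := Real.sqrt (t : ℝ) with hstdef
    have hst : 0 < st := Real.sqrt_pos.mpr htpos
    set η : ℝ := D / (G * st) with hη
    have hηpos : 0 < η := div_pos hD (mul_pos hG hst)
    set x := θh t with hx
    set gt := g t x with hgt
    set z := x - η • gt with hz
    have hstepEq : θh (t + 1) = P z := by
      rw [hz, hgt, hη, hstdef, hx]
      exact hstep t ht1
    have hproj : ⟪z - P z, θbar - P z⟫ ≤ 0 :=
      proj_inner hconvΘ hne hPmem hPproj z θbar hθbar
    have hexp0 : ‖z - θbar‖ ^ 2 =
        ‖z - P z‖ ^ 2 + 2 * ⟪z - P z, P z - θbar⟫ + ‖P z - θbar‖ ^ 2 := by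
      have h := norm_add_sq_real (z - P z) (P z - θbar)
      rw [sub_add_sub_cancel] at h
      exact h
    have hinner : ⟪z - P z, P z - θbar⟫ = -⟪z - P z, θbar - P z⟫ := by
      rw [show P z - θbar = -(θbar - P z) from (neg_sub _ _).symm, inner_neg_right]
    have hPz : ‖P z - θbar‖ ^ 2 ≤ ‖z - θbar‖ ^ 2 := by
      nlinarith [sq_nonneg ‖z - P z‖]
    have hzz : z - θbar = (x - θbar) - η • gt := sub_right_comm x (η • gt) θbar
    have hexp : ‖z - θbar‖ ^ 2 =
        ‖x - θbar‖ ^ 2 - 2 * η * ⟪x - θbar, gt⟫ + η ^ 2 * ‖gt‖ ^ 2 := by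
      rw [hzz, norm_sub_sq_real, real_inner_smul_right, norm_smul, Real.norm_eq_abs,
        abs_of_pos hηpos, mul_pow]
      ring
    have hA0 : r (t + 1) ≤ r t - 2 * η * ⟪x - θbar, gt⟫ + η ^ 2 * ‖gt‖ ^ 2 := by
      simp only [hr]
      rw [hstepEq, ← hx]
      linarith [hPz, hexp]
    have hNg : ‖gt‖ ^ 2 ≤ G ^ 2 := pow_le_pow_left₀ (norm_nonneg _) (hGbd t x) 2
    have hgi := grad_ineq (hconvℓ t) (hgrad t x) θbar
    have hI : ℓ t x - ℓ t θbar ≤ ⟪x - θbar, gt⟫ := by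
      have h2 : ⟪x - θbar, gt⟫ = -⟪gt, θbar - x⟫ := by
        rw [real_inner_comm, show x - θbar = -(θbar - x) from (neg_sub _ _).symm,
          inner_neg_right]
      rw [h2]
      linarith [hgi]
    have hGst : (0:ℝ) < (G * st) ^ 2 := pow_pos (mul_pos hG hst) 2
    have hmul := mul_le_mul_of_nonneg_left hA0 hGst.le
    have hexpand : (G * st) ^ 2 * (r t - 2 * η * ⟪x - θbar, gt⟫ + η ^ 2 * ‖gt‖ ^ 2)
        = (G * st) ^ 2 * r t - 2 * D * G * st * ⟪x - θbar, gt⟫ + D ^ 2 * ‖gt‖ ^ 2 := by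
      rw [hη]
      field_simp
    rw [hexpand] at hmul
    have hD2Ng : D ^ 2 * ‖gt‖ ^ 2 ≤ D ^ 2 * G ^ 2 :=
      mul_le_mul_of_nonneg_left hNg (sq_nonneg D)
    have hA2 : 2 * D * G * st * ⟪x - θbar, gt⟫ ≤
        (G * st) ^ 2 * r t - (G * st) ^ 2 * r (t + 1) + D ^ 2 * G ^ 2 := by
      linarith [hmul, hD2Ng]
    have hpos : (0:ℝ) < 2 * D * G * st :=
      mul_pos (mul_pos (mul_pos two_pos hD) hG) hst
    have hI2 : ⟪x - θbar, gt⟫ ≤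
        ((G * st) ^ 2 * r t - (G * st) ^ 2 * r (t + 1) + D ^ 2 * G ^ 2) / (2 * D * G * st) := by
      rw [le_div_iff₀ hpos]
      linarith [hA2]
    have heq : ((G * st) ^ 2 * r t - (G * st) ^ 2 * r (t + 1) + D ^ 2 * G ^ 2) / (2 * D * G * st)
        = a t * (r t - r (t + 1)) + G * D / (2 * st) := by
      simp only [ha]
      rw [← hstdef]
      field_simp
    rw [heq] at hI2
    linarith [hI, hI2]
  calc ∑ t ∈ Finset.Icc 1 T, (ℓ t (θh t) - ℓ t θbar)
      ≤ ∑ t ∈ Finset.Icc 1 T, (a t * (r t - r (t + 1)) + G * D / (2 * Real.sqrt t)) :=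
        Finset.sum_le_sum step
    _ = ∑ t ∈ Finset.Icc 1 T, a t * (r t - r (t + 1))
        + ∑ t ∈ Finset.Icc 1 T, (G * D / (2 * Real.sqrt t)) := Finset.sum_add_distrib
    _ ≤ a T * D ^ 2 + (G * D / 2) * (2 * Real.sqrt T) := by
        have h1 := telescope_bound a r (D ^ 2) ha0 hmono hr0 hrB T hT
        have h2 : ∑ t ∈ Finset.Icc 1 T, (G * D / (2 * Real.sqrt t))
            = (G * D / 2) * ∑ t ∈ Finset.Icc 1 T, (1 / Real.sqrt t) := by
          rw [Finset.mul_sum]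
          exact Finset.sum_congr rfl fun t _ => by ring
        have h3 : a T * (D ^ 2 - r (T + 1)) ≤ a T * D ^ 2 := by
          nlinarith [ha0 T, hr0 (T + 1)]
        have h4 : (0:ℝ) ≤ G * D / 2 := div_nonneg (mul_nonneg hG.le hD.le) (by norm_num)
        have h5 := mul_le_mul_of_nonneg_left (sum_inv_sqrt T) h4
        rw [h2]
        linarith [h1, h3, h5]
    _ ≤ (3 / 2) * G * D * Real.sqrt T := by
        have hsT : (0:ℝ) ≤ Real.sqrt (T : ℝ) := Real.sqrt_nonneg _
        have he : a T * D ^ 2 = G * D * Real.sqrt (T : ℝ) / 2 := by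
          simp only [ha]
          field_simp
        rw [he]
        ring_nf
        linarith
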